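/- arXiv:2202.12921 — 3 statements merged into one kernel-verified Lean document; each statement's English description precedes it below -/
import Mathlib

section
/- For reals s⁺ and s₁⁻,...,s_n⁻ with n ≥ 1, log(1 + ∑_j exp(s_j⁻ - s⁺)) ≥ (1/n) ∑_j max(0, s_j⁻ - s⁺). (The contrastive loss upper bounds the mean zero-margin triplet loss.) -/
open Real Finset

theorem contrastive_ge_mean_triplet (n : ℕ) (hn : 1 ≤ n) (sp : ℝ) (s : Fin n → ℝ) :
    Real.log (1 + ∑ j, Real.exp (s j - sp)) ≥
      (1 / n) * ∑ j, max 0 (s j - sp) := by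
  set L := Real.log (1 + ∑ j, Real.exp (s j - sp)) with hL
  have hsum_pos : (0:ℝ) < 1 + ∑ j, Real.exp (s j - sp) := by
    have : (0:ℝ) ≤ ∑ j, Real.exp (s j - sp) :=
      Finset.sum_nonneg fun j _ => (Real.exp_pos _).le
    linarith
  have key : ∀ j : Fin n, max 0 (s j - sp) ≤ L := by
    intro j
    have h1 : Real.exp (max 0 (s j - sp)) ≤ 1 + ∑ k, Real.exp (s k - sp) := by
      have hj : Real.exp (s j - sp) ≤ ∑ k, Real.exp (s k - sp) :=
        Finset.single_le_sum (fun k _ => (Real.exp_pos (s k - sp)).le) (Finset.mem_univ j)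
      rcases le_total (s j - sp) 0 with h | h
      · rw [max_eq_left h, Real.exp_zero]
        have : (0:ℝ) ≤ ∑ k, Real.exp (s k - sp) :=
          Finset.sum_nonneg fun k _ => (Real.exp_pos _).le
        linarith
      · rw [max_eq_right h]
        linarith
    calc max 0 (s j - sp) = Real.log (Real.exp (max 0 (s j - sp))) := (Real.log_exp _).symm
      _ ≤ L := Real.log_le_log (Real.exp_pos _) h1
  have hsum : ∑ j, max 0 (s j - sp) ≤ n * L := by
    calc ∑ j, max 0 (s j - sp) ≤ ∑ _j : Fin n, L := Finset.sum_le_sum fun j _ => key j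
      _ = n * L := by simp [mul_comm]
  have hn' : (0:ℝ) < n := by exact_mod_cast hn
  rw [ge_iff_le, div_mul_eq_mul_div, one_mul, div_le_iff₀ hn']
  linarith [hsum]
end

section
/- The Jaccard distance d_J(A,B) = 1 - μ(A∩B)/μ(A∪B) satisfies the triangle inequality for measurable sets A, B, C of finite positive measure under a measure μ (with the convention d_J(A,B) = 0 when μ(A∪B) = 0). -/
open MeasureTheory

noncomputable def jaccardDist {α : Type*} [MeasurableSpace α] (μ : Measure α)
    (A B : Set α) : ℝ :=
  if μ (A ∪ B) = 0 then 0
  else 1 - (μ (A ∩ B)).toReal / (μ (A ∪ B)).toReal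

set_option maxRecDepth 8000 in
private lemma jaccard_key (a b c d e f g : ℝ) (ha : 0 ≤ a) (hb : 0 ≤ b) (hc : 0 ≤ c)
    (hd : 0 ≤ d) (he : 0 ≤ e) (hf : 0 ≤ f) (hg : 0 ≤ g)
    (hX : 0 < a+c+d+e+f+g) (hY : 0 < a+b+d+e+f+g) (hZ : 0 < b+c+d+e+f+g) :
    (a+c+d+f)/(a+c+d+e+f+g) ≤ (a+b+e+f)/(a+b+d+e+f+g) + (b+c+d+e)/(b+c+d+e+f+g) := by
  rw [div_add_div _ _ (ne_of_gt hY) (ne_of_gt hZ), div_le_div_iff₀ hX (mul_pos hY hZ)]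
  linarith [mul_nonneg (mul_nonneg he hg) hg, mul_nonneg (mul_nonneg he hf) hg, mul_nonneg (mul_nonneg he hf) hf, mul_nonneg (mul_nonneg he he) hg, mul_nonneg (mul_nonneg he he) hf, mul_nonneg (mul_nonneg he he) he, mul_nonneg (mul_nonneg hd he) hg, mul_nonneg (mul_nonneg hd he) hf, mul_nonneg (mul_nonneg hd he) he, mul_nonneg (mul_nonneg hd hd) he, mul_nonneg (mul_nonneg hc hf) hg, mul_nonneg (mul_nonneg hc hf) hf, mul_nonneg (mul_nonneg hc he) hg, mul_nonneg (mul_nonneg hc he) hf, mul_nonneg (mul_nonneg hc he) he, mul_nonneg (mul_nonneg hc hd) hf, mul_nonneg (mul_nonneg hc hd) he, mul_nonneg (mul_nonneg hc hc) hf, mul_nonneg (mul_nonneg hc hc) he, mul_nonneg (mul_nonneg hb hg) hg, mul_nonneg (mul_nonneg hb hf) hg, mul_nonneg (mul_nonneg hb hf) hf, mul_nonneg (mul_nonneg hb he) hg, mul_nonneg (mul_nonneg hb he) hf, mul_nonneg (mul_nonneg hb he) he, mul_nonneg (mul_nonneg hb hd) hg, mul_nonneg (mul_nonneg hb hd) hf,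 mul_nonneg (mul_nonneg hb hd) he, mul_nonneg (mul_nonneg hb hd) hd, mul_nonneg (mul_nonneg hb hc) hg, mul_nonneg (mul_nonneg hb hc) hf, mul_nonneg (mul_nonneg hb hc) he, mul_nonneg (mul_nonneg hb hc) hd, mul_nonneg (mul_nonneg hb hc) hc, mul_nonneg (mul_nonneg hb hb) hg, mul_nonneg (mul_nonneg hb hb) hf, mul_nonneg (mul_nonneg hb hb) he, mul_nonneg (mul_nonneg hb hb) hd, mul_nonneg (mul_nonneg hb hb) hc, mul_nonneg (mul_nonneg ha he) hg, mul_nonneg (mul_nonneg ha he) hf, mul_nonneg (mul_nonneg ha he) he, mul_nonneg (mul_nonneg ha hd) hg, mul_nonneg (mul_nonneg ha hd) hf, mul_nonneg (mul_nonneg ha hd) he, mul_nonneg (mul_nonneg ha hd) hd, mul_nonneg (mul_nonneg ha hc) hg, mul_nonneg (mul_nonneg ha hc) hf, mul_nonneg (mul_nonneg ha hc) he, mul_nonneg (mul_nonneg ha hc) hd, mul_nonneg (mul_nonneg ha hc) hc, mul_nonneg (mul_nonneg ha hb) hg, mul_nonneg (mul_nonneg ha hb) hf, mul_nonneg (mul_nonneg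 ha hb) he, mul_nonneg (mul_nonneg ha hb) hd, mul_nonneg (mul_nonneg ha hb) hc, mul_nonneg (mul_nonneg ha hb) hb, mul_nonneg (mul_nonneg ha ha) he, mul_nonneg (mul_nonneg ha ha) hd, mul_nonneg (mul_nonneg ha ha) hc, mul_nonneg (mul_nonneg ha ha) hb]

private lemma toReal_union {α : Type*} [MeasurableSpace α] (μ : Measure α)
    [IsFiniteMeasure μ] {s t : Set α} (h : Disjoint s t) (ht : MeasurableSet t) :
    (μ (s ∪ t)).toReal = (μ s).toReal + (μ t).toReal := by
  rw [measure_union h ht, ENNReal.toReal_add (measure_ne_top μ s) (measure_ne_top μ t)]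

set_option maxHeartbeats 2000000 in
theorem jaccardDist_triangle {α : Type*} [MeasurableSpace α] (μ : Measure α)
    [IsFiniteMeasure μ] (A B C : Set α)
    (hA : MeasurableSet A) (hB : MeasurableSet B) (hC : MeasurableSet C)
    (hApos : 0 < μ A) (hBpos : 0 < μ B) (hCpos : 0 < μ C) :
    jaccardDist μ A C ≤ jaccardDist μ A B + jaccardDist μ B C := by
  classical
  set sa := A \ (B ∪ C) with hsa_def
  set sb := B \ (A ∪ C) with hsb_def
  set sc := C \ (A ∪ B) with hsc_def
  set sd := (A ∩ B) \ C with hsd_def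
  set se := (A ∩ C) \ B with hse_def
  set sf := (B ∩ C) \ A with hsf_def
  set sg := (A ∩ B) ∩ C with hsg_def
  have msa : MeasurableSet sa := hA.diff (hB.union hC)
  have msb : MeasurableSet sb := hB.diff (hA.union hC)
  have msc : MeasurableSet sc := hC.diff (hA.union hB)
  have msd : MeasurableSet sd := (hA.inter hB).diff hC
  have mse : MeasurableSet se := (hA.inter hC).diff hB
  have msf : MeasurableSet sf := (hB.inter hC).diff hA
  have msg : MeasurableSet sg := (hA.inter hB).inter hC
  have dj : ∀ s t : Set α, (∀ x, x ∈ s → x ∈ t → False) → Disjoint s t := by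
    intro s t h
    exact Set.disjoint_left.mpr h
  have d_ab : Disjoint sa sb := dj _ _ (by
    simp only [hsa_def, hsb_def, Set.mem_diff, Set.mem_union]; tauto)
  have d_ac : Disjoint sa sc := dj _ _ (by
    simp only [hsa_def, hsc_def, Set.mem_diff, Set.mem_union]; tauto)
  have d_ad : Disjoint sa sd := dj _ _ (by
    simp only [hsa_def, hsd_def, Set.mem_diff, Set.mem_union, Set.mem_inter_iff]; tauto)
  have d_ae : Disjoint sa se := dj _ _ (by
    simp only [hsa_def, hse_def, Set.mem_diff, Set.mem_union, Set.mem_inter_iff]; tauto)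
  have d_af : Disjoint sa sf := dj _ _ (by
    simp only [hsa_def, hsf_def, Set.mem_diff, Set.mem_union, Set.mem_inter_iff]; tauto)
  have d_ag : Disjoint sa sg := dj _ _ (by
    simp only [hsa_def, hsg_def, Set.mem_diff, Set.mem_union, Set.mem_inter_iff]; tauto)
  have d_bc : Disjoint sb sc := dj _ _ (by
    simp only [hsb_def, hsc_def, Set.mem_diff, Set.mem_union]; tauto)
  have d_bd : Disjoint sb sd := dj _ _ (by
    simp only [hsb_def, hsd_def, Set.mem_diff, Set.mem_union, Set.mem_inter_iff]; tauto)
  have d_be : Disjoint sb se := dj _ _ (by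
    simp only [hsb_def, hse_def, Set.mem_diff, Set.mem_union, Set.mem_inter_iff]; tauto)
  have d_bf : Disjoint sb sf := dj _ _ (by
    simp only [hsb_def, hsf_def, Set.mem_diff, Set.mem_union, Set.mem_inter_iff]; tauto)
  have d_bg : Disjoint sb sg := dj _ _ (by
    simp only [hsb_def, hsg_def, Set.mem_diff, Set.mem_union, Set.mem_inter_iff]; tauto)
  have d_cd : Disjoint sc sd := dj _ _ (by
    simp only [hsc_def, hsd_def, Set.mem_diff, Set.mem_union, Set.mem_inter_iff]; tauto)
  have d_ce : Disjoint sc se := dj _ _ (by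
    simp only [hsc_def, hse_def, Set.mem_diff, Set.mem_union, Set.mem_inter_iff]; tauto)
  have d_cf : Disjoint sc sf := dj _ _ (by
    simp only [hsc_def, hsf_def, Set.mem_diff, Set.mem_union, Set.mem_inter_iff]; tauto)
  have d_cg : Disjoint sc sg := dj _ _ (by
    simp only [hsc_def, hsg_def, Set.mem_diff, Set.mem_union, Set.mem_inter_iff]; tauto)
  have d_de : Disjoint sd se := dj _ _ (by
    simp only [hsd_def, hse_def, Set.mem_diff, Set.mem_inter_iff]; tauto)
  have d_df : Disjoint sd sf := dj _ _ (by
    simp only [hsd_def, hsf_def, Set.mem_diff, Set.mem_inter_iff]; tauto)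
  have d_dg : Disjoint sd sg := dj _ _ (by
    simp only [hsd_def, hsg_def, Set.mem_diff, Set.mem_inter_iff]; tauto)
  have d_ef : Disjoint se sf := dj _ _ (by
    simp only [hse_def, hsf_def, Set.mem_diff, Set.mem_inter_iff]; tauto)
  have d_eg : Disjoint se sg := dj _ _ (by
    simp only [hse_def, hsg_def, Set.mem_diff, Set.mem_inter_iff]; tauto)
  have d_fg : Disjoint sf sg := dj _ _ (by
    simp only [hsf_def, hsg_def, Set.mem_diff, Set.mem_inter_iff]; tauto)
  -- real values
  set a := (μ sa).toReal with ha_def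
  set b := (μ sb).toReal with hb_def
  set c := (μ sc).toReal with hc_def
  set d := (μ sd).toReal with hd_def
  set e := (μ se).toReal with he_def
  set f := (μ sf).toReal with hf_def
  set g := (μ sg).toReal with hg_def
  have ha : 0 ≤ a := ENNReal.toReal_nonneg
  have hb : 0 ≤ b := ENNReal.toReal_nonneg
  have hc : 0 ≤ c := ENNReal.toReal_nonneg
  have hd : 0 ≤ d := ENNReal.toReal_nonneg
  have he : 0 ≤ e := ENNReal.toReal_nonneg
  have hf : 0 ≤ f := ENNReal.toReal_nonneg
  have hg : 0 ≤ g := ENNReal.toReal_nonneg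
  -- unions of atoms
  have U_fg : (μ (sf ∪ sg)).toReal = f + g := toReal_union μ d_fg msg
  have U_efg : (μ (se ∪ (sf ∪ sg))).toReal = e + f + g := by
    rw [toReal_union μ (d_ef.union_right d_eg) (msf.union msg), U_fg]; ring
  have U_defg : (μ (sd ∪ (se ∪ (sf ∪ sg)))).toReal = d + e + f + g := by
    rw [toReal_union μ (d_de.union_right (d_df.union_right d_dg))
      (mse.union (msf.union msg)), U_efg]; ring
  have U_cdefg : (μ (sc ∪ (sd ∪ (se ∪ (sf ∪ sg))))).toReal = c + d + e + f + g := by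
    rw [toReal_union μ (d_cd.union_right (d_ce.union_right (d_cf.union_right d_cg)))
      (msd.union (mse.union (msf.union msg))), U_defg]; ring
  have U_bdefg : (μ (sb ∪ (sd ∪ (se ∪ (sf ∪ sg))))).toReal = b + d + e + f + g := by
    rw [toReal_union μ (d_bd.union_right (d_be.union_right (d_bf.union_right d_bg)))
      (msd.union (mse.union (msf.union msg))), U_defg]; ring
  have U_bcdefg : (μ (sb ∪ (sc ∪ (sd ∪ (se ∪ (sf ∪ sg)))))).toReal
      = b + c + d + e + f + g := by
    rw [toReal_union μ
      (d_bc.union_right (d_bd.union_right (d_be.union_right (d_bf.union_right d_bg))))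
      (msc.union (msd.union (mse.union (msf.union msg)))), U_cdefg]; ring
  -- the six measures
  have eqAC : A ∪ C = sa ∪ (sc ∪ (sd ∪ (se ∪ (sf ∪ sg)))) := by
    rw [hsa_def, hsc_def, hsd_def, hse_def, hsf_def, hsg_def]
    ext x
    simp only [Set.mem_union, Set.mem_diff, Set.mem_inter_iff]
    tauto
  have eqAB : A ∪ B = sa ∪ (sb ∪ (sd ∪ (se ∪ (sf ∪ sg)))) := by
    rw [hsa_def, hsb_def, hsd_def, hse_def, hsf_def, hsg_def]
    ext x
    simp only [Set.mem_union, Set.mem_diff, Set.mem_inter_iff]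
    tauto
  have eqBC : B ∪ C = sb ∪ (sc ∪ (sd ∪ (se ∪ (sf ∪ sg)))) := by
    rw [hsb_def, hsc_def, hsd_def, hse_def, hsf_def, hsg_def]
    ext x
    simp only [Set.mem_union, Set.mem_diff, Set.mem_inter_iff]
    tauto
  have eqiAC : A ∩ C = se ∪ sg := by
    rw [hse_def, hsg_def]
    ext x
    simp only [Set.mem_union, Set.mem_diff, Set.mem_inter_iff]
    tauto
  have eqiAB : A ∩ B = sd ∪ sg := by
    rw [hsd_def, hsg_def]
    ext x
    simp only [Set.mem_union, Set.mem_diff, Set.mem_inter_iff]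
    tauto
  have eqiBC : B ∩ C = sf ∪ sg := by
    rw [hsf_def, hsg_def]
    ext x
    simp only [Set.mem_union, Set.mem_diff, Set.mem_inter_iff]
    tauto
  have hX : (μ (A ∪ C)).toReal = a + c + d + e + f + g := by
    rw [eqAC, toReal_union μ
      (d_ac.union_right (d_ad.union_right (d_ae.union_right (d_af.union_right d_ag))))
      (msc.union (msd.union (mse.union (msf.union msg)))), U_cdefg]; ring
  have hY : (μ (A ∪ B)).toReal = a + b + d + e + f + g := by
    rw [eqAB, toReal_union μ
      (d_ab.union_right (d_ad.union_right (d_ae.union_right (d_af.union_right d_ag))))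
      (msb.union (msd.union (mse.union (msf.union msg)))), U_bdefg]; ring
  have hZ : (μ (B ∪ C)).toReal = b + c + d + e + f + g := by
    rw [eqBC, U_bcdefg]
  have hx : (μ (A ∩ C)).toReal = e + g := by
    rw [eqiAC, toReal_union μ d_eg msg]
  have hy : (μ (A ∩ B)).toReal = d + g := by
    rw [eqiAB, toReal_union μ d_dg msg]
  have hz : (μ (B ∩ C)).toReal = f + g := by
    rw [eqiBC, toReal_union μ d_fg msg]
  -- positivity of denominators
  have hACne : μ (A ∪ C) ≠ 0 :=
    fun h => (lt_irrefl (0 : ENNReal)) (lt_of_lt_of_le hApos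
      (le_trans (measure_mono Set.subset_union_left) (le_of_eq h)))
  have hABne : μ (A ∪ B) ≠ 0 :=
    fun h => (lt_irrefl (0 : ENNReal)) (lt_of_lt_of_le hApos
      (le_trans (measure_mono Set.subset_union_left) (le_of_eq h)))
  have hBCne : μ (B ∪ C) ≠ 0 :=
    fun h => (lt_irrefl (0 : ENNReal)) (lt_of_lt_of_le hBpos
      (le_trans (measure_mono Set.subset_union_left) (le_of_eq h)))
  have hXpos : 0 < a + c + d + e + f + g := by
    rw [← hX]; exact ENNReal.toReal_pos hACne (measure_ne_top μ _)
  have hYpos : 0 < a + b + d + e + f + g := by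
    rw [← hY]; exact ENNReal.toReal_pos hABne (measure_ne_top μ _)
  have hZpos : 0 < b + c + d + e + f + g := by
    rw [← hZ]; exact ENNReal.toReal_pos hBCne (measure_ne_top μ _)
  have key := jaccard_key a b c d e f g ha hb hc hd he hf hg hXpos hYpos hZpos
  have e1 : 1 - (e+g)/(a+c+d+e+f+g) = (a+c+d+f)/(a+c+d+e+f+g) := by
    field_simp <;> ring
  have e2 : 1 - (d+g)/(a+b+d+e+f+g) = (a+b+e+f)/(a+b+d+e+f+g) := by
    field_simp <;> ring
  have e3 : 1 - (f+g)/(b+c+d+e+f+g) = (b+c+d+e)/(b+c+d+e+f+g) := by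
    field_simp <;> ring
  simp only [jaccardDist, if_neg hACne, if_neg hABne, if_neg hBCne]
  rw [hX, hY, hZ, hx, hy, hz]
  linarith [key, e1, e2, e3]
end

section
/- For finite sets A, B, C, the Jaccard distance d_J(A,C) ≤ d_J(A,B) + d_J(B,C), where d_J(X,Y) = 1 - |X∩Y|/|X∪Y| (with d_J(X,Y)=0 when X∪Y = ∅). Hence d_J is a metric on finite subsets (up to equality of sets). -/
noncomputable def jaccardDistFinset {α : Type*} [DecidableEq α]
    (X Y : Finset α) : ℝ :=
  if X ∪ Y = ∅ then 0
  else 1 - ((X ∩ Y).card : ℝ) / ((X ∪ Y).card : ℝ)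

lemma jaccardDistFinset_nonneg {α : Type*} [DecidableEq α] (X Y : Finset α) :
    0 ≤ jaccardDistFinset X Y := by
  unfold jaccardDistFinset
  split
  · exact le_refl 0
  · rename_i h
    have hpos : (0:ℝ) < ((X ∪ Y).card : ℝ) := by
      exact_mod_cast Finset.card_pos.mpr (Finset.nonempty_of_ne_empty h)
    have hle : ((X ∩ Y).card : ℝ) ≤ ((X ∪ Y).card : ℝ) := by
      exact_mod_cast Finset.card_le_card (Finset.inter_subset_union)
    have := div_le_one_of_le₀ hle (le_of_lt hpos)
    linarith

lemma jaccard_keypoly (a b c d e f g : ℕ) :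
    ((d+g)*(b+c+d+e+f+g) + (f+g)*(a+b+d+e+f+g))*(a+c+d+e+f+g)
      ≤ ((a+c+d+e+f+g) + (e+g))*((a+b+d+e+f+g)*(b+c+d+e+f+g)) := by
  have h : ((a+c+d+e+f+g) + (e+g))*((a+b+d+e+f+g)*(b+c+d+e+f+g))
      = ((d+g)*(b+c+d+e+f+g) + (f+g)*(a+b+d+e+f+g))*(a+c+d+e+f+g)
      + (2*e*g*g + 4*e*f*g + 2*e*f*f + 4*e*e*g + 4*e*e*f + 2*e*e*e + 4*d*e*g + 4*d*e*f
        + 4*d*e*e + 2*d*d*e + c*f*g + c*f*f + 3*c*e*g + 4*c*e*f + 3*c*e*e + c*d*f + 3*c*d*e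
        + c*c*f + c*c*e + 2*b*g*g + 3*b*f*g + b*f*f + 6*b*e*g + 5*b*e*f + 4*b*e*e + 3*b*d*g
        + 2*b*d*f + 5*b*d*e + b*d*d + 2*b*c*g + 2*b*c*f + 4*b*c*e + 2*b*c*d + b*c*c + 2*b*b*g
        + b*b*f + 2*b*b*e + b*b*d + b*b*c + 3*a*e*g + 3*a*e*f + 3*a*e*e + a*d*g + a*d*f
        + 4*a*d*e + a*d*d + 2*a*c*g + 2*a*c*f + 4*a*c*e + 2*a*c*d + a*c*c + 2*a*b*g + 2*a*b*f
        + 4*a*b*e + 2*a*b*d + 2*a*b*c + a*b*b + a*a*e + a*a*d + a*a*c + a*a*b) := by ring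
  rw [h]
  exact Nat.le_add_right _ _

theorem jaccardDistFinset_triangle {α : Type*} [DecidableEq α]
    (A B C : Finset α) :
    jaccardDistFinset A C ≤ jaccardDistFinset A B + jaccardDistFinset B C := by
  by_cases hAC : A ∪ C = ∅
  · rw [show jaccardDistFinset A C = 0 from by rw [jaccardDistFinset, if_pos hAC]]
    exact add_nonneg (jaccardDistFinset_nonneg A B) (jaccardDistFinset_nonneg B C)
  by_cases hAB : A ∪ B = ∅
  · obtain ⟨hA, hB⟩ := Finset.union_eq_empty.mp hAB
    subst hA; subst hB
    have h0 : jaccardDistFinset (∅ : Finset α) ∅ = 0 := by simp [jaccardDistFinset]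
    rw [h0]; linarith
  by_cases hBC : B ∪ C = ∅
  · obtain ⟨hB, hC⟩ := Finset.union_eq_empty.mp hBC
    subst hB; subst hC
    have h0 : jaccardDistFinset (∅ : Finset α) ∅ = 0 := by simp [jaccardDistFinset]
    rw [h0]; linarith
  -- main case: all unions nonempty
  have huAB : (0:ℝ) < ((A ∪ B).card : ℝ) := by
    exact_mod_cast Finset.card_pos.mpr (Finset.nonempty_of_ne_empty hAB)
  have huBC : (0:ℝ) < ((B ∪ C).card : ℝ) := by
    exact_mod_cast Finset.card_pos.mpr (Finset.nonempty_of_ne_empty hBC)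
  have huAC : (0:ℝ) < ((A ∪ C).card : ℝ) := by
    exact_mod_cast Finset.card_pos.mpr (Finset.nonempty_of_ne_empty hAC)
  rw [jaccardDistFinset, jaccardDistFinset, jaccardDistFinset,
    if_neg hAC, if_neg hAB, if_neg hBC]
  have key : ((A ∩ B).card : ℝ) / ((A ∪ B).card : ℝ)
      + ((B ∩ C).card : ℝ) / ((B ∪ C).card : ℝ)
      ≤ 1 + ((A ∩ C).card : ℝ) / ((A ∪ C).card : ℝ) := by
    rw [div_add_div _ _ (ne_of_gt huAB) (ne_of_gt huBC)]
    have h1 : (1:ℝ) + ((A ∩ C).card : ℝ) / ((A ∪ C).card : ℝ)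
        = (((A ∪ C).card : ℝ) + ((A ∩ C).card : ℝ)) / ((A ∪ C).card : ℝ) := by
      field_simp
    rw [h1, div_le_div_iff₀ (by positivity) huAC]
    -- region decomposition
    set S := A ∪ B ∪ C with hS
    have hkey : ∀ X : Finset α, X ⊆ S → X.card = ∑ x ∈ S, if x ∈ X then 1 else 0 := by
      intro X hX
      rw [← Finset.card_filter, Finset.filter_mem_eq_inter, Finset.inter_eq_right.mpr hX]
    have mem_tac : ∀ X : Finset α, (∀ x, x ∈ X → x ∈ A ∨ x ∈ B ∨ x ∈ C) → X ⊆ S := by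
      intro X h x hx
      simp only [hS, Finset.mem_union]
      rcases h x hx with h | h | h <;> tauto
    have sAB : A ∪ B ⊆ S := mem_tac _ (fun x hx => by
      simp only [Finset.mem_union] at hx; tauto)
    have sBC : B ∪ C ⊆ S := mem_tac _ (fun x hx => by
      simp only [Finset.mem_union] at hx; tauto)
    have sAC : A ∪ C ⊆ S := mem_tac _ (fun x hx => by
      simp only [Finset.mem_union] at hx; tauto)
    have siAB : A ∩ B ⊆ S := mem_tac _ (fun x hx => by
      simp only [Finset.mem_inter] at hx; tauto)
    have siBC : B ∩ C ⊆ S := mem_tac _ (fun x hx => by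
      simp only [Finset.mem_inter] at hx; tauto)
    have siAC : A ∩ C ⊆ S := mem_tac _ (fun x hx => by
      simp only [Finset.mem_inter] at hx; tauto)
    have s1 : A \ (B ∪ C) ⊆ S := mem_tac _ (fun x hx => by
      simp only [Finset.mem_sdiff] at hx; tauto)
    have s2 : B \ (A ∪ C) ⊆ S := mem_tac _ (fun x hx => by
      simp only [Finset.mem_sdiff] at hx; tauto)
    have s3 : C \ (A ∪ B) ⊆ S := mem_tac _ (fun x hx => by
      simp only [Finset.mem_sdiff] at hx; tauto)
    have s4 : (A ∩ B) \ C ⊆ S := mem_tac _ (fun x hx => by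
      simp only [Finset.mem_sdiff, Finset.mem_inter] at hx; tauto)
    have s5 : (A ∩ C) \ B ⊆ S := mem_tac _ (fun x hx => by
      simp only [Finset.mem_sdiff, Finset.mem_inter] at hx; tauto)
    have s6 : (B ∩ C) \ A ⊆ S := mem_tac _ (fun x hx => by
      simp only [Finset.mem_sdiff, Finset.mem_inter] at hx; tauto)
    have s7 : A ∩ B ∩ C ⊆ S := mem_tac _ (fun x hx => by
      simp only [Finset.mem_inter] at hx; tauto)
    set a := (A \ (B ∪ C)).card with ha
    set b := (B \ (A ∪ C)).card with hb
    set c := (C \ (A ∪ B)).card with hc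
    set d := ((A ∩ B) \ C).card with hd
    set e := ((A ∩ C) \ B).card with he
    set f := ((B ∩ C) \ A).card with hf
    set g := (A ∩ B ∩ C).card with hg
    have eqsum : ∀ (X : Finset α), X ⊆ S →
        ∀ (Y₁ Y₂ Y₃ Y₄ Y₅ Y₆ : Finset α), Y₁ ⊆ S → Y₂ ⊆ S → Y₃ ⊆ S → Y₄ ⊆ S → Y₅ ⊆ S → Y₆ ⊆ S →
        (∀ x ∈ S, (if x ∈ X then 1 else 0) = (if x ∈ Y₁ then 1 else 0) + (if x ∈ Y₂ then 1 else 0)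
          + (if x ∈ Y₃ then 1 else 0) + (if x ∈ Y₄ then 1 else 0) + (if x ∈ Y₅ then 1 else 0)
          + (if x ∈ Y₆ then 1 else 0)) →
        X.card = Y₁.card + Y₂.card + Y₃.card + Y₄.card + Y₅.card + Y₆.card := by
      intro X hX Y₁ Y₂ Y₃ Y₄ Y₅ Y₆ h1 h2 h3 h4 h5 h6 hpt
      rw [hkey _ hX, hkey _ h1, hkey _ h2, hkey _ h3, hkey _ h4, hkey _ h5, hkey _ h6,
        ← Finset.sum_add_distrib, ← Finset.sum_add_distrib, ← Finset.sum_add_distrib,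
        ← Finset.sum_add_distrib, ← Finset.sum_add_distrib]
      exact Finset.sum_congr rfl hpt
    have eqsum2 : ∀ (X : Finset α), X ⊆ S →
        ∀ (Y₁ Y₂ : Finset α), Y₁ ⊆ S → Y₂ ⊆ S →
        (∀ x ∈ S, (if x ∈ X then 1 else 0) = (if x ∈ Y₁ then 1 else 0)
          + (if x ∈ Y₂ then 1 else 0)) →
        X.card = Y₁.card + Y₂.card := by
      intro X hX Y₁ Y₂ h1 h2 hpt
      rw [hkey _ hX, hkey _ h1, hkey _ h2, ← Finset.sum_add_distrib]
      exact Finset.sum_congr rfl hpt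
    have hcAB : (A ∪ B).card = a + b + d + e + f + g := by
      apply eqsum _ sAB _ _ _ _ _ _ s1 s2 s4 s5 s6 s7
      intro x _
      by_cases hxA : x ∈ A <;> by_cases hxB : x ∈ B <;> by_cases hxC : x ∈ C <;>
        simp [hxA, hxB, hxC]
    have hcBC : (B ∪ C).card = b + c + d + e + f + g := by
      apply eqsum _ sBC _ _ _ _ _ _ s2 s3 s4 s5 s6 s7
      intro x _
      by_cases hxA : x ∈ A <;> by_cases hxB : x ∈ B <;> by_cases hxC : x ∈ C <;>
        simp [hxA, hxB, hxC]
    have hcAC : (A ∪ C).card = a + c + d + e + f + g := by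
      apply eqsum _ sAC _ _ _ _ _ _ s1 s3 s4 s5 s6 s7
      intro x _
      by_cases hxA : x ∈ A <;> by_cases hxB : x ∈ B <;> by_cases hxC : x ∈ C <;>
        simp [hxA, hxB, hxC]
    have hiAB : (A ∩ B).card = d + g := by
      apply eqsum2 _ siAB _ _ s4 s7
      intro x _
      by_cases hxA : x ∈ A <;> by_cases hxB : x ∈ B <;> by_cases hxC : x ∈ C <;>
        simp [hxA, hxB, hxC]
    have hiBC : (B ∩ C).card = f + g := by
      apply eqsum2 _ siBC _ _ s6 s7
      intro x _
      by_cases hxA : x ∈ A <;> by_cases hxB : x ∈ B <;> by_cases hxC : x ∈ C <;>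
        simp [hxA, hxB, hxC]
    have hiAC : (A ∩ C).card = e + g := by
      apply eqsum2 _ siAC _ _ s5 s7
      intro x _
      by_cases hxA : x ∈ A <;> by_cases hxB : x ∈ B <;> by_cases hxC : x ∈ C <;>
        simp [hxA, hxB, hxC]
    have keyN := jaccard_keypoly a b c d e f g
    have keyR : (((d+g)*(b+c+d+e+f+g) + (f+g)*(a+b+d+e+f+g))*(a+c+d+e+f+g) : ℝ)
        ≤ (((a+c+d+e+f+g) + (e+g))*((a+b+d+e+f+g)*(b+c+d+e+f+g)) : ℝ) := by
      exact_mod_cast keyN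
    rw [hcAB, hcBC, hcAC, hiAB, hiBC, hiAC]
    push_cast
    push_cast at keyR
    linarith only [keyR]
  linarith
end
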